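/- If H is a k-uniform hypergraph on n vertices with m edges and ρ is the largest eigenvalue of its signless Laplacian Q, then BE(H) ≤ √ρ + √((n−1)(km − ρ)). -/

import Mathlib

open Matrix BigOperators Finset

/-- Incidence matrix of a hypergraph on vertex set `Fin n` with edges `E : Fin m → Finset (Fin n)`. -/
noncomputable def inc {n m : ℕ} (E : Fin m → Finset (Fin n)) : Matrix (Fin n) (Fin m) ℝ :=
  fun v e => if v ∈ E e then 1 else 0

/-- Adjacency matrix of the line multigraph: `(e,f)`-entry is `|E e ∩ E f|` for `e ≠ f`, `0` on diagonal. -/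
noncomputable def lineAdj {n m : ℕ} (E : Fin m → Finset (Fin n)) : Matrix (Fin m) (Fin m) ℝ :=
  fun e f => if e = f then 0 else ((E e ∩ E f).card : ℝ)

/-- Adjacency matrix of the clique multigraph: `(u,v)`-entry is the number of edges containing both. -/
noncomputable def cliqueAdj {n m : ℕ} (E : Fin m → Finset (Fin n)) : Matrix (Fin n) (Fin n) ℝ :=
  fun u v => if u = v then 0 else ((univ.filter fun e => u ∈ E e ∧ v ∈ E e).card : ℝ)

/-- Degree of a vertex: number of edges containing it. -/
def deg {n m : ℕ} (E : Fin m → Finset (Fin n)) (v : Fin n) : ℕ :=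
  (univ.filter fun e => v ∈ E e).card

/-- `BE(H) ≤ √ρ + √((n-1)(km - ρ))` where `ρ` is the signless Laplacian
spectral radius. -/
theorem stmt9 {n m k : ℕ} (E : Fin m → Finset (Fin n))
    (hk2 : 2 ≤ k) (hk : ∀ e, (E e).card = k)
    (hQ : (inc E * (inc E)ᵀ).IsHermitian)
    (ρ : ℝ) (hρ : IsGreatest (Set.range hQ.eigenvalues) ρ) :
    (∑ i, Real.sqrt (hQ.eigenvalues i)) ≤
      Real.sqrt ρ + Real.sqrt ((n - 1) * (k * m - ρ)) := by
  -- positivity of the matrix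
  have hpsd : (inc E * (inc E)ᵀ).PosSemidef := by
    have h := Matrix.posSemidef_self_mul_conjTranspose (inc E)
    simpa [Matrix.conjTranspose_eq_transpose_of_trivial] using h
  have hev : ∀ i, 0 ≤ hQ.eigenvalues i := fun i => hpsd.eigenvalues_nonneg i
  -- trace
  have htr : ∑ i, hQ.eigenvalues i = (k : ℝ) * m := by
    have h1 : (inc E * (inc E)ᵀ).trace =
        Matrix.trace (Matrix.diagonal (RCLike.ofReal ∘ hQ.eigenvalues) : Matrix (Fin n) (Fin n) ℝ) := by
      conv_lhs => rw [hQ.spectral_theorem]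
      rw [Unitary.conjStarAlgAut_apply, Matrix.trace_mul_cycle]
      rw [Unitary.coe_star_mul_self, Matrix.one_mul]
    have h2 : (inc E * (inc E)ᵀ).trace = (k : ℝ) * m := by
      simp only [Matrix.trace, Matrix.diag, Matrix.mul_apply, inc, Matrix.transpose_apply]
      rw [Finset.sum_comm]
      have : ∀ e : Fin m, ∑ v, ((if v ∈ E e then (1:ℝ) else 0) * (if v ∈ E e then (1:ℝ) else 0)) = k := by
        intro e
        simp [ite_and, Finset.sum_ite_mem, hk e]
      rw [Finset.sum_congr rfl fun e _ => this e]
      simp [mul_comm]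
    rw [h1] at h2
    simpa [Matrix.trace, Matrix.diag] using h2
  obtain ⟨j0, hj0⟩ := hρ.1
  have hsplit : ∑ i, Real.sqrt (hQ.eigenvalues i)
      = Real.sqrt ρ + ∑ i ∈ univ.erase j0, Real.sqrt (hQ.eigenvalues i) := by
    rw [← Finset.add_sum_erase _ _ (Finset.mem_univ j0), hj0]
  rw [hsplit]
  apply add_le_add_right
  have hn : 1 ≤ n := j0.pos
  have hcard : (((univ : Finset (Fin n)).erase j0).card : ℝ) = (n : ℝ) - 1 := by
    rw [Finset.card_erase_of_mem (Finset.mem_univ j0), Finset.card_univ, Fintype.card_fin,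
      Nat.cast_sub hn, Nat.cast_one]
  have hsum2 : ∑ i ∈ univ.erase j0, hQ.eigenvalues i = (k : ℝ) * m - ρ := by
    have h := Finset.add_sum_erase univ hQ.eigenvalues (Finset.mem_univ j0)
    rw [htr] at h
    rw [hj0] at h
    linarith
  have key : (∑ i ∈ univ.erase j0, Real.sqrt (hQ.eigenvalues i))^2
      ≤ (((univ : Finset (Fin n)).erase j0).card : ℝ) *
        ∑ i ∈ univ.erase j0, (Real.sqrt (hQ.eigenvalues i))^2 := by
    exact sq_sum_le_card_mul_sum_sq
  have hsq : ∑ i ∈ univ.erase j0, (Real.sqrt (hQ.eigenvalues i))^2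
      = (k : ℝ) * m - ρ := by
    rw [← hsum2]
    exact Finset.sum_congr rfl fun i _ => Real.sq_sqrt (hev i)
  rw [hsq, hcard] at key
  have hnn : 0 ≤ ∑ i ∈ univ.erase j0, Real.sqrt (hQ.eigenvalues i) :=
    Finset.sum_nonneg fun i _ => Real.sqrt_nonneg _
  calc ∑ i ∈ univ.erase j0, Real.sqrt (hQ.eigenvalues i)
      = Real.sqrt ((∑ i ∈ univ.erase j0, Real.sqrt (hQ.eigenvalues i))^2) := by
        rw [Real.sqrt_sq hnn]
    _ ≤ Real.sqrt (((n : ℝ) - 1) * ((k : ℝ) * m - ρ)) := Real.sqrt_le_sqrt key
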